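/- arXiv:2412.15422 — 2 statements merged into one kernel-verified Lean document; each statement's English description precedes it below -/
import Mathlib

section
/- Taylor expansion of the Wilson action on the Lie algebra (claim in the proof of Lemma 3.1): For every N×N skew-Hermitian complex matrix A one has |Re Tr(I − exp(A)) − (1/2)·Tr(A·Aᴴ)| ≤ (1/24)·(Tr(A·Aᴴ))². (Here Tr(A·Aᴴ) is a nonnegative real number; in particular Re Tr(A) = 0, Tr(A²) = −Tr(A·Aᴴ) and Re Tr(A³) = 0 for skew-Hermitian A.) -/
open Matrix
open scoped Matrix

noncomputable section

lemma sin_lower (x : ℝ) (hx : 0 ≤ x) : x - x ^ 3 / 6 ≤ Real.sin x := by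
  have hg : ∀ y : ℝ, HasDerivAt (fun t => Real.sin t - t + t ^ 3 / 6)
      (Real.cos y - 1 + 3 * y ^ (3-1) / 6) y := fun y =>
    (((Real.hasDerivAt_sin y).sub (hasDerivAt_id y)).add ((hasDerivAt_pow 3 y).div_const 6))
  have hmono : Monotone (fun t : ℝ => Real.sin t - t + t ^ 3 / 6) := by
    apply monotone_of_deriv_nonneg
    · exact fun y => ((hg y).differentiableAt)
    · intro y
      rw [(hg y).deriv]
      have := Real.one_sub_sq_div_two_le_cos (x := y)
      norm_num
      nlinarith
  have h0 : (fun t : ℝ => Real.sin t - t + t ^ 3 / 6) 0 = 0 := by norm_num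
  have := hmono hx
  simp only [h0] at this
  norm_num at this ⊢
  linarith

lemma cos_upper (x : ℝ) : Real.cos x ≤ 1 - x ^ 2 / 2 + x ^ 4 / 24 := by
  have key : ∀ y : ℝ, 0 ≤ y → Real.cos y ≤ 1 - y ^ 2 / 2 + y ^ 4 / 24 := by
    intro y hy
    have hf : ∀ t : ℝ, HasDerivAt (fun s => 1 - s ^ 2 / 2 + s ^ 4 / 24 - Real.cos s)
        (0 - (2:ℕ) * t ^ (2-1) / 2 + (4:ℕ) * t ^ (4-1) / 24 - (-Real.sin t)) t := fun t =>
      (((hasDerivAt_const t (1:ℝ)).sub ((hasDerivAt_pow 2 t).div_const 2)).add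
        ((hasDerivAt_pow 4 t).div_const 24)).sub (Real.hasDerivAt_cos t)
    have hmono : MonotoneOn (fun s : ℝ => 1 - s ^ 2 / 2 + s ^ 4 / 24 - Real.cos s)
        (Set.Ici (0:ℝ)) := by
      apply monotoneOn_of_deriv_nonneg (convex_Ici 0)
      · exact fun t _ => ((hf t).differentiableAt).continuousAt.continuousWithinAt
      · exact fun t _ => ((hf t).differentiableAt).differentiableWithinAt
      · intro t ht
        rw [interior_Ici] at ht
        rw [(hf t).deriv]
        have := sin_lower t ht.le
        norm_num
        nlinarith
    have := hmono (Set.self_mem_Ici) (Set.mem_Ici.2 hy) hy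
    simp only [Real.cos_zero] at this
    norm_num at this
    linarith
  rcases le_or_gt 0 x with h | h
  · exact key x h
  · have := key (-x) (by linarith)
    rw [neg_pow, neg_pow] at this; norm_num at this; linarith

lemma cos_quartic_bound (x : ℝ) : |1 - Real.cos x - x ^ 2 / 2| ≤ x ^ 4 / 24 := by
  rw [abs_le]
  constructor
  · have := cos_upper x; linarith
  · have := Real.one_sub_sq_div_two_le_cos (x := x)
    nlinarith [sq_nonneg (x^2), sq_nonneg x]

/-- **Taylor expansion of the Wilson action on the Lie algebra**
(claim in the proof of Lemma 3.1): for every skew-Hermitian `A`,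
`|Re Tr(I − exp A) − ½ Tr(A Aᴴ)| ≤ (1/24) (Tr(A Aᴴ))²`. -/
theorem wilson_action_taylor (N : ℕ) (hN : 1 ≤ N)
    (A : Matrix (Fin N) (Fin N) ℂ) (hA : Aᴴ = -A) :
    |(Matrix.trace ((1 : Matrix (Fin N) (Fin N) ℂ) - NormedSpace.exp A)).re -
        1 / 2 * (Matrix.trace (A * Aᴴ)).re| ≤
      1 / 24 * ((Matrix.trace (A * Aᴴ)).re) ^ 2 := by
  classical
  -- B = i • A is Hermitian
  have hB : (Complex.I • A).IsHermitian := by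
    rw [Matrix.IsHermitian, Matrix.conjTranspose_smul, hA, Complex.star_def, Complex.conj_I,
      neg_smul, smul_neg, neg_neg]
  set U : Matrix (Fin N) (Fin N) ℂ := (hB.eigenvectorUnitary : Matrix (Fin N) (Fin N) ℂ) with hUdef
  set μ : Fin N → ℝ := hB.eigenvalues with hμdef
  have hUU : star U * U = 1 := hB.eigenvectorUnitary.2.1
  have hUU' : U * star U = 1 := hB.eigenvectorUnitary.2.2
  let u : (Matrix (Fin N) (Fin N) ℂ)ˣ := ⟨U, star U, hUU', hUU⟩
  have hspec : Complex.I • A = U * Matrix.diagonal (fun j => (μ j : ℂ)) * star U := by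
    have := hB.spectral_theorem
    rw [this, Unitary.conjStarAlgAut_apply]
    rfl
  -- diagonalize A
  have hAU : A = U * Matrix.diagonal (fun j => -Complex.I * (μ j : ℂ)) * star U := by
    have h1 : A = (-Complex.I) • (Complex.I • A) := by
      rw [smul_smul]; norm_num
    rw [h1, hspec, ← Matrix.smul_mul, ← Matrix.mul_smul, ← Matrix.diagonal_smul]
    rfl
  -- exponential
  have hexp : NormedSpace.exp A
      = U * Matrix.diagonal (fun j => Complex.exp (-Complex.I * (μ j : ℂ))) * star U := by
    rw [hAU]
    refine (Matrix.exp_units_conj u _).trans ?_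
    rw [Matrix.exp_diagonal]
    congr 2
    funext j
    rw [Pi.exp_def, ← Complex.exp_eq_exp_ℂ]
  -- traces
  have htrconj : ∀ D : Matrix (Fin N) (Fin N) ℂ,
      Matrix.trace (U * D * star U) = Matrix.trace D := by
    intro D
    rw [Matrix.trace_mul_cycle, hUU, Matrix.one_mul]
  have htrexp : Matrix.trace (NormedSpace.exp A)
      = ∑ j, Complex.exp (-Complex.I * (μ j : ℂ)) := by
    rw [hexp, htrconj, Matrix.trace_diagonal]
  have hcancel : ∀ M : Matrix (Fin N) (Fin N) ℂ, star U * (U * M) = M := by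
    intro M; rw [← Matrix.mul_assoc, hUU, Matrix.one_mul]
  have hA2 : Matrix.trace (A * Aᴴ) = ∑ j, ((μ j : ℂ)) ^ 2 := by
    set D := Matrix.diagonal (fun j => -Complex.I * (μ j : ℂ)) with hD
    have step : (U * D * star U) * (U * D * star U) = U * (D * D) * star U := by
      simp only [Matrix.mul_assoc]
      rw [hcancel]
    rw [hA, Matrix.mul_neg, Matrix.trace_neg, hAU, step, htrconj, hD,
      Matrix.diagonal_mul_diagonal, Matrix.trace_diagonal]
    rw [← Finset.sum_neg_distrib]
    congr 1
    funext j
    have h2 : -Complex.I * (μ j : ℂ) * (-Complex.I * (μ j : ℂ)) = -((μ j : ℂ) ^ 2) := by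
      ring_nf
      rw [Complex.I_sq]
      ring
    rw [h2, neg_neg]
  -- real parts
  have hre1 : (Matrix.trace ((1 : Matrix (Fin N) (Fin N) ℂ) - NormedSpace.exp A)).re
      = ∑ j, (1 - Real.cos (μ j)) := by
    rw [Matrix.trace_sub, htrexp, Matrix.trace_one]
    push_cast
    rw [Complex.sub_re]
    rw [Complex.re_sum]
    simp only [Complex.natCast_re]
    rw [Finset.sum_sub_distrib]
    congr 1
    · simp [Finset.card_univ]
    · congr 1
      funext j
      have : -Complex.I * (μ j : ℂ) = ((-(μ j) : ℝ) : ℂ) * Complex.I := by push_cast; ring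
      rw [this, Complex.exp_ofReal_mul_I_re, Real.cos_neg]
  have hre2 : (Matrix.trace (A * Aᴴ)).re = ∑ j, (μ j) ^ 2 := by
    rw [hA2, Complex.re_sum]
    congr 1
    funext j
    rw [← Complex.ofReal_pow, Complex.ofReal_re]
  rw [hre1, hre2]
  have key : |∑ j, (1 - Real.cos (μ j)) - 1 / 2 * ∑ j, (μ j) ^ 2|
      ≤ ∑ j, (μ j) ^ 4 / 24 := by
    rw [Finset.mul_sum, ← Finset.sum_sub_distrib]
    refine (Finset.abs_sum_le_sum_abs _ _).trans ?_
    apply Finset.sum_le_sum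
    intro j _
    have := cos_quartic_bound (μ j)
    calc |1 - Real.cos (μ j) - 1 / 2 * (μ j) ^ 2| = |1 - Real.cos (μ j) - (μ j) ^ 2 / 2| := by
          ring_nf
      _ ≤ (μ j) ^ 4 / 24 := this
  refine key.trans ?_
  have hsum : ∑ j, (μ j) ^ 4 ≤ (∑ j, (μ j) ^ 2) ^ 2 := by
    have := Finset.sum_sq_le_sq_sum_of_nonneg (s := Finset.univ)
      (f := fun j => (μ j) ^ 2) (fun i _ => sq_nonneg _)
    calc ∑ j, (μ j) ^ 4 = ∑ j, ((μ j) ^ 2) ^ 2 := by congr 1; funext j; ring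
      _ ≤ (∑ j, (μ j) ^ 2) ^ 2 := this
  calc ∑ j, (μ j) ^ 4 / 24 = (∑ j, (μ j) ^ 4) / 24 := by rw [Finset.sum_div]
      _ ≤ (∑ j, (μ j) ^ 2) ^ 2 / 24 := by gcongr
      _ = 1 / 24 * (∑ j, (μ j) ^ 2) ^ 2 := by ring
end
end

section
/- Second-derivative bound (inequality (4.3) in the proof of Lemma 4.1): For every A ∈ u(N) and all a₁, a₂ ∈ U(N), one has |tr(A·a₁)·Tr(ρ(A)·τ(a₂))| ≤ (1/N)·|A|²·|c|^{1/2}·d. -/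
open Matrix
open scoped Matrix

noncomputable section

/-- The inner product on `u(N)`: `⟨X,Y⟩ = N · Re Tr (X Yᴴ)`. -/
def gInner (N : ℕ) (X Y : Matrix (Fin N) (Fin N) ℂ) : ℝ :=
  (N : ℝ) * (Matrix.trace (X * Yᴴ)).re

/-- The norm on `u(N)`. -/
def gNorm (N : ℕ) (X : Matrix (Fin N) (Fin N) ℂ) : ℝ :=
  Real.sqrt (gInner N X X)

/-- Skew-Hermitian matrices (the Lie algebra `u(N)`). -/
def IsSkew (N : ℕ) (A : Matrix (Fin N) (Fin N) ℂ) : Prop := Aᴴ = -A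

/-- The normalized trace `tr = (1/N)·Tr`, as a complex number. -/
def ntr (N : ℕ) (A : Matrix (Fin N) (Fin N) ℂ) : ℂ :=
  Matrix.trace A / (N : ℂ)

def mvec (n : ℕ) : Matrix (Fin n) (Fin n) ℂ →ₗ[ℝ] EuclideanSpace ℂ (Fin n × Fin n) where
  toFun M := (WithLp.equiv 2 _).symm (fun p => M p.1 p.2)
  map_add' X Y := by ext p; simp [Matrix.add_apply]
  map_smul' r X := by ext p; simp [Matrix.smul_apply]

lemma inner_mvec (n : ℕ) (X Y : Matrix (Fin n) (Fin n) ℂ) :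
    (inner ℂ (mvec n Y) (mvec n X) : ℂ) = Matrix.trace (X * Yᴴ) := by
  simp only [PiLp.inner_apply, RCLike.inner_apply, mvec, LinearMap.coe_mk, AddHom.coe_mk,
    WithLp.equiv_symm_apply, PiLp.toLp_apply, Matrix.trace, Matrix.diag, Matrix.mul_apply,
    Matrix.conjTranspose_apply]
  rw [Fintype.sum_prod_type]
  congr 1

lemma norm_mvec_sq (n : ℕ) (X : Matrix (Fin n) (Fin n) ℂ) :
    ‖mvec n X‖ ^ 2 = (Matrix.trace (X * Xᴴ)).re := by
  rw [← inner_mvec]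
  exact (inner_self_eq_norm_sq (𝕜 := ℂ) _).symm

lemma trace_cs (n : ℕ) (X Y : Matrix (Fin n) (Fin n) ℂ) :
    ‖Matrix.trace (X * Yᴴ)‖ ≤ ‖mvec n X‖ * ‖mvec n Y‖ := by
  rw [← inner_mvec]
  exact (norm_inner_le_norm _ _).trans_eq (mul_comm _ _)

lemma mvec_unitary (n : ℕ) (a : Matrix.unitaryGroup (Fin n) ℂ) :
    ‖mvec n ((a : Matrix (Fin n) (Fin n) ℂ)ᴴ)‖ = Real.sqrt n := by
  have h : ‖mvec n ((a : Matrix (Fin n) (Fin n) ℂ)ᴴ)‖ ^ 2 = (n : ℝ) := by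
    rw [norm_mvec_sq, Matrix.conjTranspose_conjTranspose]
    have : (a : Matrix (Fin n) (Fin n) ℂ)ᴴ * (a : Matrix (Fin n) (Fin n) ℂ) = 1 := by
      simpa [Matrix.star_eq_conjTranspose] using a.prop.1
    simp [this, Matrix.trace_one]
  rw [← Real.sqrt_sq (norm_nonneg _), h]

lemma trace_mul_unitary_le (n : ℕ) (X : Matrix (Fin n) (Fin n) ℂ)
    (a : Matrix.unitaryGroup (Fin n) ℂ) :
    ‖Matrix.trace (X * (a : Matrix (Fin n) (Fin n) ℂ))‖ ≤ ‖mvec n X‖ * Real.sqrt n := by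
  have := trace_cs n X ((a : Matrix (Fin n) (Fin n) ℂ)ᴴ)
  rw [Matrix.conjTranspose_conjTranspose, mvec_unitary] at this
  exact this

lemma gInner_smul_smul (N : ℕ) (r s : ℝ) (X Y : Matrix (Fin N) (Fin N) ℂ) :
    gInner N (r • X) (s • Y) = r * s * gInner N X Y := by
  unfold gInner
  rw [Matrix.conjTranspose_smul]
  have : (r • X) * (star s • Yᴴ) = (r * s) • (X * Yᴴ) := by
    rw [Matrix.smul_mul, Matrix.mul_smul, smul_smul, star_trivial]
  rw [this, Matrix.trace_smul]
  have : ((r * s) • Matrix.trace (X * Yᴴ)).re = (r * s) * (Matrix.trace (X * Yᴴ)).re := by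
    simp [Complex.real_smul]
  rw [this]; ring


lemma gInner_sum_left {ι : Type*} [Fintype ι] (N : ℕ) (f : ι → ℝ)
    (L : ι → Matrix (Fin N) (Fin N) ℂ) (Y : Matrix (Fin N) (Fin N) ℂ) :
    gInner N (∑ i, f i • L i) Y = ∑ i, f i * gInner N (L i) Y := by
  simp only [gInner, Matrix.sum_mul, Matrix.smul_mul, Matrix.trace_sum, Matrix.trace_smul,
    Complex.real_smul, Complex.re_sum, Complex.mul_re, Complex.ofReal_re, Complex.ofReal_im,
    Finset.mul_sum]
  exact Finset.sum_congr rfl fun i _ => by ring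

lemma gInner_sum_right {ι : Type*} [Fintype ι] (N : ℕ) (f : ι → ℝ)
    (L : ι → Matrix (Fin N) (Fin N) ℂ) (X : Matrix (Fin N) (Fin N) ℂ) :
    gInner N X (∑ j, f j • L j) = ∑ j, f j * gInner N X (L j) := by
  simp only [gInner, Matrix.conjTranspose_sum, Matrix.conjTranspose_smul, star_trivial,
    Matrix.mul_sum, Matrix.mul_smul, Matrix.trace_sum, Matrix.trace_smul,
    Complex.real_smul, Complex.re_sum, Complex.mul_re, Complex.ofReal_re, Complex.ofReal_im,
    Finset.mul_sum]
  exact Finset.sum_congr rfl fun i _ => by ring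

/-- **Second-derivative bound** (inequality (4.3) in the proof of Lemma 4.1): for every
`A ∈ u(N)` and all `a₁, a₂ ∈ U(N)`,
`|tr(A a₁) · Tr(ρ(A) τ(a₂))| ≤ (1/N) |A|² |c|^{1/2} d`. -/
theorem second_derivative_bound (N : ℕ) (hN : 1 ≤ N)
    (L : Fin (N ^ 2) → Matrix (Fin N) (Fin N) ℂ)
    (hLskew : ∀ j, IsSkew N (L j))
    (hLorth : ∀ i j, gInner N (L i) (L j) = if i = j then 1 else 0)
    (hLspan : ∀ X : Matrix (Fin N) (Fin N) ℂ, IsSkew N X →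
      X ∈ Submodule.span ℝ (Set.range L))
    (d : ℕ) (hd : 1 ≤ d)
    (τ : Matrix.unitaryGroup (Fin N) ℂ →* Matrix.unitaryGroup (Fin d) ℂ)
    (hτ : Continuous τ)
    (ρ : Matrix (Fin N) (Fin N) ℂ →ₗ[ℝ] Matrix (Fin d) (Fin d) ℂ)
    (hρskew : ∀ A : Matrix (Fin N) (Fin N) ℂ, IsSkew N A → (ρ A)ᴴ = -(ρ A))
    (hτρ : ∀ A : Matrix (Fin N) (Fin N) ℂ, IsSkew N A →
      ∀ h : NormedSpace.exp A ∈ Matrix.unitaryGroup (Fin N) ℂ,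
        ((τ ⟨NormedSpace.exp A, h⟩ : Matrix.unitaryGroup (Fin d) ℂ) :
            Matrix (Fin d) (Fin d) ℂ) = NormedSpace.exp (ρ A))
    (c : ℝ) (hc : c ≤ 0)
    (hCasimir : (∑ j, ρ (L j) * ρ (L j)) = c • (1 : Matrix (Fin d) (Fin d) ℂ))
    (A : Matrix (Fin N) (Fin N) ℂ) (hA : IsSkew N A)
    (a₁ : Matrix.unitaryGroup (Fin N) ℂ) (a₂ : Matrix.unitaryGroup (Fin N) ℂ) :
    ‖ntr N (A * (a₁ : Matrix (Fin N) (Fin N) ℂ)) *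
        Matrix.trace (ρ A * ((τ a₂ : Matrix (Fin d) (Fin d) ℂ)))‖ ≤
      1 / N * gNorm N A ^ 2 * Real.sqrt |c| * d := by
  have hN0 : (0:ℝ) < N := by exact_mod_cast hN
  -- coordinates of A
  obtain ⟨f, hf⟩ := (Submodule.mem_span_range_iff_exists_fun ℝ).1 (hLspan A hA)
  -- abbreviations
  set x : ℝ := ‖mvec N A‖ with hx
  set y : ℝ := ‖mvec d (ρ A)‖ with hy
  -- gInner A A = N * x^2, and = ∑ f j ^ 2
  have hgA : gInner N A A = N * x ^ 2 := by
    rw [hx, norm_mvec_sq]; rfl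
  have hsumf : ∑ j, f j ^ 2 = gInner N A A := by
    conv_rhs => rw [← hf]
    rw [gInner_sum_left]
    have hcoord : ∀ i, gInner N (L i) (∑ j, f j • L j) = f i := by
      intro i
      rw [gInner_sum_right]
      simp [hLorth, mul_ite, mul_one, mul_zero]
    simp only [hcoord]
    exact Finset.sum_congr rfl fun j _ => sq (f j)
  -- sum of norms squared of ρ (L j)
  have hsumw : ∑ j, ‖mvec d (ρ (L j))‖ ^ 2 = |c| * d := by
    have e1 : ∀ j, ‖mvec d (ρ (L j))‖ ^ 2 = -(Matrix.trace (ρ (L j) * ρ (L j))).re := by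
      intro j
      rw [norm_mvec_sq, hρskew _ (hLskew j), Matrix.mul_neg, Matrix.trace_neg, Complex.neg_re]
    simp only [e1]
    have e2 : ∑ j, -(Matrix.trace (ρ (L j) * ρ (L j))).re
        = -((Matrix.trace (∑ j, ρ (L j) * ρ (L j))).re) := by
      rw [Matrix.trace_sum, Complex.re_sum, Finset.sum_neg_distrib]
    rw [e2, hCasimir]
    have : Matrix.trace (c • (1 : Matrix (Fin d) (Fin d) ℂ)) = c • (d : ℂ) := by
      rw [Matrix.trace_smul, Matrix.trace_one]
      simp
    rw [this]
    simp [Complex.real_smul, abs_of_nonpos hc]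
  -- triangle inequality + Cauchy-Schwarz: y^2 ≤ (∑ f²)(∑ ‖w‖²)
  have hy2 : y ^ 2 ≤ (N * x ^ 2) * (|c| * d) := by
    have hrA : ρ A = ∑ j, f j • ρ (L j) := by
      rw [← hf, map_sum]; simp
    have htri : y ≤ ∑ j, |f j| * ‖mvec d (ρ (L j))‖ := by
      rw [hy, hrA, map_sum]
      refine (norm_sum_le _ _).trans ?_
      refine Finset.sum_le_sum fun j _ => ?_
      rw [(mvec d).map_smul, norm_smul]
      simp [Real.norm_eq_abs]
    have hcs := Finset.sum_mul_sq_le_sq_mul_sq Finset.univ (fun j => |f j|)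
      (fun j => ‖mvec d (ρ (L j))‖)
    simp only [sq_abs] at hcs
    calc y ^ 2 ≤ (∑ j, |f j| * ‖mvec d (ρ (L j))‖) ^ 2 := by
          apply pow_le_pow_left₀ (norm_nonneg _) htri
      _ ≤ (∑ j, f j ^ 2) * (∑ j, ‖mvec d (ρ (L j))‖ ^ 2) := hcs
      _ = (N * x ^ 2) * (|c| * d) := by rw [hsumf, hgA, hsumw]
  -- the two trace bounds
  have h1 : ‖Matrix.trace (A * (a₁ : Matrix (Fin N) (Fin N) ℂ))‖ ≤ x * Real.sqrt N :=
    trace_mul_unitary_le N A a₁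
  have h2 : ‖Matrix.trace (ρ A * ((τ a₂ : Matrix (Fin d) (Fin d) ℂ)))‖ ≤ y * Real.sqrt d :=
    trace_mul_unitary_le d (ρ A) (τ a₂)
  -- assemble
  have hgNorm : gNorm N A ^ 2 = N * x ^ 2 := by
    rw [gNorm, Real.sq_sqrt]
    · exact hgA
    · rw [hgA]; positivity
  have hyb : y ≤ Real.sqrt |c| * Real.sqrt d * Real.sqrt N * x := by
    have : y = Real.sqrt (y ^ 2) := (Real.sqrt_sq (norm_nonneg _)).symm
    rw [this]
    refine (Real.sqrt_le_sqrt hy2).trans_eq ?_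
    rw [show (N:ℝ) * x ^ 2 * (|c| * d) = |c| * d * N * x^2 by ring]
    rw [Real.sqrt_mul (by positivity), Real.sqrt_sq (norm_nonneg _),
      Real.sqrt_mul (by positivity), Real.sqrt_mul (abs_nonneg _)]
  rw [norm_mul]
  have hntr : ‖ntr N (A * (a₁ : Matrix (Fin N) (Fin N) ℂ))‖
      = ‖Matrix.trace (A * (a₁ : Matrix (Fin N) (Fin N) ℂ))‖ / N := by
    rw [ntr, norm_div]
    simp
  rw [hntr, hgNorm]
  have hsN : Real.sqrt N * Real.sqrt N = N := Real.mul_self_sqrt hN0.le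
  have hsd : Real.sqrt d * Real.sqrt d = d := Real.mul_self_sqrt (by positivity)
  have hx0 : 0 ≤ x := norm_nonneg _
  have h2' : ‖Matrix.trace (ρ A * ((τ a₂ : Matrix (Fin d) (Fin d) ℂ)))‖
      ≤ Real.sqrt |c| * Real.sqrt d * Real.sqrt N * x * Real.sqrt d := by
    refine h2.trans ?_
    exact mul_le_mul_of_nonneg_right hyb (Real.sqrt_nonneg _)
  calc ‖Matrix.trace (A * (a₁:Matrix (Fin N) (Fin N) ℂ))‖ / ↑N *
        ‖Matrix.trace (ρ A * ((τ a₂ : Matrix (Fin d) (Fin d) ℂ)))‖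
      ≤ (x * Real.sqrt N / N) * (Real.sqrt |c| * Real.sqrt d * Real.sqrt N * x * Real.sqrt d) := by
        have hd1 : ‖Matrix.trace (A * (a₁:Matrix (Fin N) (Fin N) ℂ))‖ / (N:ℝ)
            ≤ x * Real.sqrt N / N := by gcongr
        exact mul_le_mul hd1 h2' (norm_nonneg _) (by positivity)
    _ = 1 / ↑N * (↑N * x ^ 2) * Real.sqrt |c| * ↑d := by
        have e : x * Real.sqrt N / ↑N *
            (Real.sqrt |c| * Real.sqrt ↑d * Real.sqrt ↑N * x * Real.sqrt ↑d)
            = (Real.sqrt N * Real.sqrt N) * (Real.sqrt ↑d * Real.sqrt ↑d) *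
              Real.sqrt |c| * x ^ 2 / ↑N := by ring
        rw [e, hsN, hsd]
        field_simp
  done
end
end
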